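/- arXiv:1509.07218 — 9 statements merged into one kernel-verified Lean document; each statement's English description precedes it below -/
import Mathlib

section
/- For every triple x = (x₁, x₂, x₃) ∈ ℂ³, the outer Napoleon triple N⁻(x) is equilateral: |N⁻(x)₁ − N⁻(x)₂| = |N⁻(x)₂ − N⁻(x)₃| = |N⁻(x)₃ − N⁻(x)₁|. -/
open Complex

/-- Inner Torricelli transformation on triples of complex numbers. -/
noncomputable def Tplus (x : ℂ × ℂ × ℂ) : ℂ × ℂ × ℂ :=
  ((x.2.1 + x.2.2) / 2 + (Real.sqrt 3 / 2 : ℝ) * Complex.I * (x.2.2 - x.2.1),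
   (x.2.2 + x.1) / 2 + (Real.sqrt 3 / 2 : ℝ) * Complex.I * (x.1 - x.2.2),
   (x.1 + x.2.1) / 2 + (Real.sqrt 3 / 2 : ℝ) * Complex.I * (x.2.1 - x.1))

/-- Outer Torricelli transformation on triples of complex numbers. -/
noncomputable def Tminus (x : ℂ × ℂ × ℂ) : ℂ × ℂ × ℂ :=
  ((x.2.1 + x.2.2) / 2 + (Real.sqrt 3 / 2 : ℝ) * (-Complex.I) * (x.2.2 - x.2.1),
   (x.2.2 + x.1) / 2 + (Real.sqrt 3 / 2 : ℝ) * (-Complex.I) * (x.1 - x.2.2),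
   (x.1 + x.2.1) / 2 + (Real.sqrt 3 / 2 : ℝ) * (-Complex.I) * (x.2.1 - x.1))

/-- Inner Napoleon transformation. -/
noncomputable def Nplus (x : ℂ × ℂ × ℂ) : ℂ × ℂ × ℂ :=
  ((x.2.1 + x.2.2 + (Tplus x).1) / 3,
   (x.2.2 + x.1 + (Tplus x).2.1) / 3,
   (x.1 + x.2.1 + (Tplus x).2.2) / 3)

/-- Outer Napoleon transformation. -/
noncomputable def Nminus (x : ℂ × ℂ × ℂ) : ℂ × ℂ × ℂ :=
  ((x.2.1 + x.2.2 + (Tminus x).1) / 3,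
   (x.2.2 + x.1 + (Tminus x).2.1) / 3,
   (x.1 + x.2.1 + (Tminus x).2.2) / 3)

/-- Centroid of a triple. -/
noncomputable def centroid3 (x : ℂ × ℂ × ℂ) : ℂ := (x.1 + x.2.1 + x.2.2) / 3
theorem outer_napoleon_equilateral (x : ℂ × ℂ × ℂ) :
    ‖(Nminus x).1 - (Nminus x).2.1‖ = ‖(Nminus x).2.1 - (Nminus x).2.2‖ ∧
    ‖(Nminus x).2.1 - (Nminus x).2.2‖ = ‖(Nminus x).2.2 - (Nminus x).1‖ := by
  set s : ℝ := Real.sqrt 3 with hs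
  have ht : ((s : ℂ) * Complex.I) ^ 2 = -3 := by
    rw [mul_pow, Complex.I_sq]
    norm_cast
    rw [hs, Real.sq_sqrt] <;> norm_num
  set ω : ℂ := -1/2 + (s/2 : ℝ) * Complex.I with hω
  have habs : ‖ω‖ = 1 := by
    have hn : Complex.normSq ω = 1 := by
      simp only [Complex.normSq_apply, hω]
      have : s ^ 2 = 3 := Real.sq_sqrt (by norm_num)
      simp
      nlinarith
    rw [Complex.norm_def, hn, Real.sqrt_one]
  have h1 : (Nminus x).2.1 - (Nminus x).2.2 = ω * ((Nminus x).1 - (Nminus x).2.1) := by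
    simp only [Nminus, Tminus, hω]
    push_cast
    linear_combination (-(x.1)/12 - x.2.1/12 + x.2.2/6) * ht
  have h2 : (Nminus x).2.2 - (Nminus x).1 = ω * ((Nminus x).2.1 - (Nminus x).2.2) := by
    simp only [Nminus, Tminus, hω]
    push_cast
    linear_combination (x.1/6 - x.2.1/12 - x.2.2/12) * ht
  refine ⟨?_, ?_⟩
  · rw [h1, norm_mul, habs, one_mul]
  · rw [h2, norm_mul, habs, one_mul]
end

section
/- For every triple x = (x₁, x₂, x₃) ∈ ℂ³, the inner Napoleon triple N⁺(x) is equilateral: |N⁺(x)₁ − N⁺(x)₂| = |N⁺(x)₂ − N⁺(x)₃| = |N⁺(x)₃ − N⁺(x)₁|. -/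
open Complex

theorem inner_napoleon_equilateral (x : ℂ × ℂ × ℂ) :
    ‖(Nplus x).1 - (Nplus x).2.1‖ = ‖(Nplus x).2.1 - (Nplus x).2.2‖ ∧
    ‖(Nplus x).2.1 - (Nplus x).2.2‖ = ‖(Nplus x).2.2 - (Nplus x).1‖ := by

  obtain ⟨a, b, c⟩ := x
  set s : ℂ := ((Real.sqrt 3 : ℝ) : ℂ) with hs
  have hs2 : s ^ 2 = 3 := by
    rw [hs]
    norm_cast
    rw [Real.sq_sqrt] <;> norm_num
  set ζ : ℂ := -1/2 - (s/2) * Complex.I with hζ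
  have habs : ‖ζ‖ = 1 := by
    have : Complex.normSq ζ = 1 := by
      rw [hζ, hs]
      simp [Complex.normSq_apply]
      have h3 : Real.sqrt 3 * Real.sqrt 3 = 3 := Real.mul_self_sqrt (by norm_num)
      ring_nf
      nlinarith [h3]
    rw [Complex.norm_def, this, Real.sqrt_one]
  have hI : Complex.I ^ 2 = -1 := Complex.I_sq
  have h1 : (Nplus (a,b,c)).2.1 - (Nplus (a,b,c)).2.2
      = ζ * ((Nplus (a,b,c)).1 - (Nplus (a,b,c)).2.1) := by
    simp only [Nplus, Tplus, hζ]
    push_cast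
    linear_combination ((a + b - 2*c) / 12) * hs2 + (s^2 * (2*c - a - b) / 12) * hI
  have h2 : (Nplus (a,b,c)).2.2 - (Nplus (a,b,c)).1
      = ζ * ((Nplus (a,b,c)).2.1 - (Nplus (a,b,c)).2.2) := by
    simp only [Nplus, Tplus, hζ]
    push_cast
    linear_combination ((b + c - 2*a) / 12) * hs2 + (s^2 * (2*a - b - c) / 12) * hI
  constructor
  · rw [h1, norm_mul, habs, one_mul]
  · rw [h2, norm_mul, habs, one_mul]
end

section
/- If a triple x = (x₁, x₂, x₃) ∈ ℂ³ satisfies x₁ + ω·x₂ + ω²·x₃ = 0 with ω = exp(2πI/3), then the inner Torricelli transformation fixes it: T⁺(x) = x. -/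
open Complex

theorem inner_torricelli_fixes_equilateral (x : ℂ × ℂ × ℂ)
    (h : x.1 + Complex.exp (2 * Real.pi * Complex.I / 3) * x.2.1 +
      Complex.exp (2 * Real.pi * Complex.I / 3) ^ 2 * x.2.2 = 0) :
    Tplus x = x := by
  set w : ℂ := Complex.exp (2 * Real.pi * Complex.I / 3) with hw
  have hs : ((Real.sqrt 3 : ℝ) : ℂ) ^ 2 = 3 := by
    norm_cast
    rw [Real.sq_sqrt] <;> norm_num
  have hI : Complex.I ^ 2 = -1 := Complex.I_sq
  have hωval : w = -1/2 + ((Real.sqrt 3 : ℝ) : ℂ)/2 * Complex.I := by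
    rw [hw]
    have h1 : (2 * (Real.pi : ℂ) * Complex.I / 3 : ℂ)
        = ((2 * Real.pi / 3 : ℝ) : ℂ) * Complex.I := by push_cast; ring
    rw [h1, Complex.exp_mul_I]
    have h2 : (2 * Real.pi / 3 : ℝ) = Real.pi - Real.pi / 3 := by ring
    rw [← Complex.ofReal_cos, ← Complex.ofReal_sin, h2, Real.cos_pi_sub, Real.sin_pi_sub,
      Real.cos_pi_div_three, Real.sin_pi_div_three]
    push_cast; ring
  have hω2 : w ^ 2 + w + 1 = 0 := by
    rw [hωval]; linear_combination (Complex.I ^ 2 / 4) * hs + (3 / 4) * hI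
  have hsI : ((Real.sqrt 3 / 2 : ℝ) : ℂ) * Complex.I = w + 1/2 := by
    rw [hωval]; push_cast; ring
  obtain ⟨a, b, c⟩ := x
  simp only at h
  simp only [Tplus, Prod.mk.injEq]
  refine ⟨?_, ?_, ?_⟩
  · linear_combination (-1 : ℂ) * h + c * hω2 + (c - b) * hsI
  · linear_combination (-w^2) * h + (a + (w - 1) * (b + w * c)) * hω2 + (a - c) * hsI
  · linear_combination (-w) * h + (b + (w - 1) * c) * hω2 + (b - a) * hsI
end

section
/- If a triple x = (x₁, x₂, x₃) ∈ ℂ³ satisfies x₁ + ω·x₂ + ω²·x₃ = 0 with ω = exp(2πI/3), then the outer Torricelli configuration reflects each vertex across the midpoint of the opposite side: T⁻(x)₁ = x₂ + x₃ − x₁, T⁻(x)₂ = x₃ + x₁ − x₂, and T⁻(x)₃ = x₁ + x₂ − x₃. -/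
open Complex

theorem outer_torricelli_reflects_equilateral (x : ℂ × ℂ × ℂ)
    (h : x.1 + Complex.exp (2 * Real.pi * Complex.I / 3) * x.2.1 +
      Complex.exp (2 * Real.pi * Complex.I / 3) ^ 2 * x.2.2 = 0) :
    (Tminus x).1 = x.2.1 + x.2.2 - x.1 ∧
    (Tminus x).2.1 = x.2.2 + x.1 - x.2.1 ∧
    (Tminus x).2.2 = x.1 + x.2.1 - x.2.2 := by
  have harg : (2 * (Real.pi : ℂ) * Complex.I / 3) = ((2 * Real.pi / 3 : ℝ) : ℂ) * Complex.I := by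
    push_cast; ring
  have hcos : Real.cos (2 * Real.pi / 3) = -(1/2) := by
    have e : (2 * Real.pi / 3 : ℝ) = Real.pi - Real.pi / 3 := by ring
    rw [e, Real.cos_pi_sub, Real.cos_pi_div_three]
  have hsin : Real.sin (2 * Real.pi / 3) = Real.sqrt 3 / 2 := by
    have e : (2 * Real.pi / 3 : ℝ) = Real.pi - Real.pi / 3 := by ring
    rw [e, Real.sin_pi_sub, Real.sin_pi_div_three]
  have h3 : ((Real.sqrt 3 : ℝ) : ℂ) ^ 2 = 3 := by
    rw [← Complex.ofReal_pow, Real.sq_sqrt (by norm_num : (0:ℝ) ≤ 3)]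
    norm_num
  have hω : Complex.exp (2 * Real.pi * Complex.I / 3)
      = -(1/2) + ((Real.sqrt 3 : ℝ) : ℂ) / 2 * Complex.I := by
    rw [harg, Complex.exp_mul_I, ← Complex.ofReal_cos, ← Complex.ofReal_sin, hcos, hsin]
    push_cast; ring
  have hω2 : (-(1/2) + ((Real.sqrt 3 : ℝ) : ℂ) / 2 * Complex.I) ^ 2
      = -(1/2) - ((Real.sqrt 3 : ℝ) : ℂ) / 2 * Complex.I := by
    linear_combination (Complex.I ^ 2 / 4) * h3 + (3/4) * Complex.I_sq
  rw [hω, hω2] at h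
  set S : ℂ := ((Real.sqrt 3 : ℝ) : ℂ) with hS
  refine ⟨?_, ?_, ?_⟩
  · simp only [Tminus]; push_cast; linear_combination h
  · simp only [Tminus]; push_cast
    linear_combination (-(1/2) - S/2 * Complex.I) * h
      + (x.2.1 - x.2.2) * (Complex.I ^ 2 / 4) * h3
      + (x.2.1 - x.2.2) * (3/4) * Complex.I_sq
  · simp only [Tminus]; push_cast
    linear_combination (-(1/2) + S/2 * Complex.I) * h
      + (x.2.2 - x.2.1) * (Complex.I ^ 2 / 4) * h3
      + (x.2.2 - x.2.1) * (3/4) * Complex.I_sq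
end

section
/- The outer Napoleon transformation is eventually 2-periodic: for every triple x = (x₁, x₂, x₃) ∈ ℂ³ and every integer k ≥ 1, the (k+2)-fold iterate of N⁻ applied to x equals the k-fold iterate of N⁻ applied to x. -/
open Complex

lemma key (y : ℂ × ℂ × ℂ) : Nminus (Nminus (Nminus y)) = Nminus y := by
  obtain ⟨a, b, c⟩ := y
  have hs : ((Real.sqrt 3 : ℝ) : ℂ) ^ 2 = 3 := by
    rw [← Complex.ofReal_pow, Real.sq_sqrt (by norm_num : (0:ℝ) ≤ 3)]
    norm_num
  have ht : (((Real.sqrt 3 : ℝ) : ℂ) * -Complex.I) ^ 2 = -3 := by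
    linear_combination (Complex.I ^ 2) * hs + 3 * Complex.I_sq
  simp only [Nminus, Tminus, Prod.mk.injEq]
  push_cast
  refine ⟨?_, ?_, ?_⟩
  · linear_combination (a/12 - b/24 - c/24 + (b - c) * (((Real.sqrt 3 : ℝ) : ℂ) * -Complex.I)/72) * ht
  · linear_combination (b/12 - c/24 - a/24 + (c - a) * (((Real.sqrt 3 : ℝ) : ℂ) * -Complex.I)/72) * ht
  · linear_combination (c/12 - a/24 - b/24 + (a - b) * (((Real.sqrt 3 : ℝ) : ℂ) * -Complex.I)/72) * ht

theorem outer_napoleon_eventually_two_periodic (x : ℂ × ℂ × ℂ) (k : ℕ) (hk : 1 ≤ k) :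
    Nminus^[k + 2] x = Nminus^[k] x := by
  induction k with
  | zero => omega
  | succ n ih =>
    rcases Nat.eq_zero_or_pos n with h | h
    · subst h
      show Nminus^[3] x = Nminus^[1] x
      simp [Function.iterate_succ_apply', key]
    · have := ih h
      simp only [Function.iterate_succ_apply'] at *
      rw [this]
end

section
/- For every triple x = (x₁, x₂, x₃) ∈ ℂ³, the double outer Napoleon transformation is the convex combination N⁻(N⁻(x))ᵢ = (2/3)·xᵢ + (1/3)·T⁺(x)ᵢ for i = 1, 2, 3 of the original triple and its inner Torricelli configuration. -/
open Complex

theorem double_outer_napoleon_formula (x : ℂ × ℂ × ℂ) :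
    (Nminus (Nminus x)).1 = (2 / 3 : ℂ) * x.1 + (1 / 3 : ℂ) * (Tplus x).1 ∧
    (Nminus (Nminus x)).2.1 = (2 / 3 : ℂ) * x.2.1 + (1 / 3 : ℂ) * (Tplus x).2.1 ∧
    (Nminus (Nminus x)).2.2 = (2 / 3 : ℂ) * x.2.2 + (1 / 3 : ℂ) * (Tplus x).2.2 := by
  have h : (Real.sqrt 3 : ℂ) * (Real.sqrt 3 : ℂ) * (Complex.I * Complex.I) = -3 := by
    rw [Complex.I_mul_I, ← Complex.ofReal_mul, Real.mul_self_sqrt (by norm_num)]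
    norm_num
  refine ⟨?_, ?_, ?_⟩ <;>
  · simp only [Nminus, Tminus, Tplus]
    push_cast
    first
    | linear_combination ((x.2.2 + x.2.1) / 36 - x.1 / 18) * h
    | linear_combination ((x.1 + x.2.2) / 36 - x.2.1 / 18) * h
    | linear_combination ((x.2.1 + x.1) / 36 - x.2.2 / 18) * h
end

section
/- If a triple x = (x₁, x₂, x₃) ∈ ℂ³ is positively oriented, i.e., Im((conj(x₂ − x₁))·(x₃ − x₁)) ≥ 0, then the triple is at least as close to its inner Torricelli configuration as to its outer one: Σᵢ |T⁺(x)ᵢ − xᵢ|² ≤ Σᵢ |T⁻(x)ᵢ − xᵢ|², with equality if and only if x₁, x₂, x₃ are collinear, i.e., Im((conj(x₂ − x₁))·(x₃ − x₁)) = 0. -/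
open Complex

/-- Key algebraic identity: the defect between outer and inner sums is
`6√3` times the orientation quantity. -/
theorem torricelli_key (x : ℂ × ℂ × ℂ) :
    ‖(Tminus x).1 - x.1‖ ^ 2 + ‖(Tminus x).2.1 - x.2.1‖ ^ 2 +
      ‖(Tminus x).2.2 - x.2.2‖ ^ 2 -
    (‖(Tplus x).1 - x.1‖ ^ 2 + ‖(Tplus x).2.1 - x.2.1‖ ^ 2 +
      ‖(Tplus x).2.2 - x.2.2‖ ^ 2) =
    6 * Real.sqrt 3 * ((starRingEnd ℂ) (x.2.1 - x.1) * (x.2.2 - x.1)).im := by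
  obtain ⟨a, b, c⟩ := x
  simp only [Tplus, Tminus, Complex.sq_norm, Complex.normSq_apply]
  simp only [Complex.add_re, Complex.add_im, Complex.sub_re, Complex.sub_im, Complex.mul_re,
    Complex.mul_im, Complex.neg_re, Complex.neg_im, Complex.I_re, Complex.I_im,
    Complex.ofReal_re, Complex.ofReal_im, Complex.conj_re, Complex.conj_im,
    Complex.div_ofNat_re, Complex.div_ofNat_im]
  ring

theorem inner_torricelli_closer_than_outer (x : ℂ × ℂ × ℂ)
    (hpos : 0 ≤ ((starRingEnd ℂ) (x.2.1 - x.1) * (x.2.2 - x.1)).im) :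
    (‖(Tplus x).1 - x.1‖ ^ 2 + ‖(Tplus x).2.1 - x.2.1‖ ^ 2 +
        ‖(Tplus x).2.2 - x.2.2‖ ^ 2 ≤
      ‖(Tminus x).1 - x.1‖ ^ 2 + ‖(Tminus x).2.1 - x.2.1‖ ^ 2 +
        ‖(Tminus x).2.2 - x.2.2‖ ^ 2) ∧
    (‖(Tplus x).1 - x.1‖ ^ 2 + ‖(Tplus x).2.1 - x.2.1‖ ^ 2 +
        ‖(Tplus x).2.2 - x.2.2‖ ^ 2 =
      ‖(Tminus x).1 - x.1‖ ^ 2 + ‖(Tminus x).2.1 - x.2.1‖ ^ 2 +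
        ‖(Tminus x).2.2 - x.2.2‖ ^ 2 ↔
      ((starRingEnd ℂ) (x.2.1 - x.1) * (x.2.2 - x.1)).im = 0) := by
  have key := torricelli_key x
  have hs : (0:ℝ) < Real.sqrt 3 := Real.sqrt_pos.mpr (by norm_num)
  constructor
  · nlinarith [mul_nonneg (mul_nonneg (by norm_num : (0:ℝ) ≤ 6) hs.le) hpos]
  · constructor
    · intro h
      have h6 : 6 * Real.sqrt 3 * ((starRingEnd ℂ) (x.2.1 - x.1) * (x.2.2 - x.1)).im = 0 := by
        linarith
      rcases mul_eq_zero.mp h6 with h' | h'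
      · exact absurd h' (by positivity)
      · exact h'
    · intro h
      rw [h] at key
      linarith
end

section
/- Uniqueness of the optimally aligned equilateral triangle: let x = (x₁, x₂, x₃) ∈ ℂ³ be strictly positively oriented, i.e., Im((conj(x₂ − x₁))·(x₃ − x₁)) > 0, and write z = N⁻(N⁻(x)). If a triple y = (y₁, y₂, y₃) ∈ ℂ³ satisfies |y₁ − y₂| = |y₁ − y₃| = |y₂ − y₃| and Σᵢ |xᵢ − yᵢ|² = Σᵢ |xᵢ − zᵢ|², i.e., it attains the minimum of the sum of squared distances to x among all equilateral triples, then y = z. -/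
open Complex

theorem double_outer_napoleon_unique_optimum (x : ℂ × ℂ × ℂ)
    (hpos : 0 < ((starRingEnd ℂ) (x.2.1 - x.1) * (x.2.2 - x.1)).im)
    (y : ℂ × ℂ × ℂ)
    (hy1 : ‖y.1 - y.2.1‖ = ‖y.1 - y.2.2‖)
    (hy2 : ‖y.1 - y.2.2‖ = ‖y.2.1 - y.2.2‖)
    (hopt : ‖x.1 - y.1‖ ^ 2 + ‖x.2.1 - y.2.1‖ ^ 2 +
        ‖x.2.2 - y.2.2‖ ^ 2 =
      ‖x.1 - (Nminus (Nminus x)).1‖ ^ 2 +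
        ‖x.2.1 - (Nminus (Nminus x)).2.1‖ ^ 2 +
        ‖x.2.2 - (Nminus (Nminus x)).2.2‖ ^ 2) :
    y = Nminus (Nminus x) := by
  obtain ⟨x1, x2, x3⟩ := x
  obtain ⟨y1, y2, y3⟩ := y
  dsimp only at hpos hopt hy1 hy2 ⊢
  have hR : (Real.sqrt 3:ℂ)^2 = 3 := by
    rw [show ((Real.sqrt 3:ℝ):ℂ)^2 = ((Real.sqrt 3^2 : ℝ):ℂ) by push_cast; ring,
      Real.sq_sqrt (by norm_num : (3:ℝ) ≥ 0)]
    norm_num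
  obtain ⟨a, ha⟩ : ∃ a : ℂ, a = (x1 + x2 + x3)/3 := ⟨_, rfl⟩
  obtain ⟨b, hb⟩ : ∃ b : ℂ, b = (x1 + ((-1 - (Real.sqrt 3:ℂ) * Complex.I)/2) * x2 + ((-1 + (Real.sqrt 3:ℂ) * Complex.I)/2) * x3)/3 := ⟨_, rfl⟩
  obtain ⟨c, hc⟩ : ∃ c : ℂ, c = (x1 + ((-1 + (Real.sqrt 3:ℂ) * Complex.I)/2) * x2 + ((-1 - (Real.sqrt 3:ℂ) * Complex.I)/2) * x3)/3 := ⟨_, rfl⟩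
  obtain ⟨d, hd⟩ : ∃ d : ℂ, d = (y1 + y2 + y3)/3 := ⟨_, rfl⟩
  obtain ⟨e, he⟩ : ∃ e : ℂ, e = (y1 + ((-1 - (Real.sqrt 3:ℂ) * Complex.I)/2) * y2 + ((-1 + (Real.sqrt 3:ℂ) * Complex.I)/2) * y3)/3 := ⟨_, rfl⟩
  obtain ⟨f, hf⟩ : ∃ f : ℂ, f = (y1 + ((-1 + (Real.sqrt 3:ℂ) * Complex.I)/2) * y2 + ((-1 - (Real.sqrt 3:ℂ) * Complex.I)/2) * y3)/3 := ⟨_, rfl⟩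
  have hz : Nminus (Nminus (x1, x2, x3)) = (a + b, a + ((-1 + (Real.sqrt 3:ℂ) * Complex.I)/2) * b, a + ((-1 - (Real.sqrt 3:ℂ) * Complex.I)/2) * b) := by
    simp only [Nminus, Tminus, Prod.mk.injEq]
    push_cast
    refine ⟨?_, ?_, ?_⟩
    · rw [ha, hb]; linear_combination ((1/36:ℂ)*x3*Complex.I^2 + (1/36:ℂ)*x2*Complex.I^2 + (-1/18:ℂ)*x1*Complex.I^2) * hR + ((1/12:ℂ)*x3 + (1/12:ℂ)*x2 + (-1/6:ℂ)*x1) * Complex.I_sq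
    · rw [ha, hb]; linear_combination ((-1/18:ℂ)*x3*Complex.I^2 + (1/36:ℂ)*x2*Complex.I^2 + (1/36:ℂ)*x1*Complex.I^2) * hR + ((-1/6:ℂ)*x3 + (1/12:ℂ)*x2 + (1/12:ℂ)*x1) * Complex.I_sq
    · rw [ha, hb]; linear_combination ((1/36:ℂ)*x3*Complex.I^2 + (-1/18:ℂ)*x2*Complex.I^2 + (1/36:ℂ)*x1*Complex.I^2) * hR + ((1/12:ℂ)*x3 + (-1/6:ℂ)*x2 + (1/12:ℂ)*x1) * Complex.I_sq
  have hcostC : ((Complex.normSq (x1 - y1) : ℝ) : ℂ) + ((Complex.normSq (x2 - y2) : ℝ) : ℂ)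
      + ((Complex.normSq (x3 - y3) : ℝ) : ℂ)
      = 3 * (((Complex.normSq (a - d) : ℝ) : ℂ) + ((Complex.normSq (b - e) : ℝ) : ℂ)
        + ((Complex.normSq (c - f) : ℝ) : ℂ)) := by
    simp only [← Complex.mul_conj]
    rw [ha, hb, hc, hd, he, hf]
    simp only [map_sub, map_add, map_mul, map_div₀, map_neg, map_one, map_ofNat,
      Complex.conj_I, Complex.conj_ofReal]
    linear_combination ((1/6:ℂ)*y3*((starRingEnd ℂ) y3)*Complex.I^2 + (-1/6:ℂ)*y3*((starRingEnd ℂ) y2)*Complex.I^2 + (-1/6:ℂ)*y2*((starRingEnd ℂ) y3)*Complex.I^2 + (1/6:ℂ)*y2*((starRingEnd ℂ) y2)*Complex.I^2 + (-1/6:ℂ)*((starRingEnd ℂ) x3)*y3*Complex.I^2 + (1/6:ℂ)*((starRingEnd ℂ) x3)*y2*Complex.I^2 + (1/6:ℂ)*((starRingEnd ℂ) x2)*y3*Complex.I^2 + (-1/6:ℂ)*((starRingEnd ℂ) x2)*y2*Complex.I^2 + (-1/6:ℂ)*x3*((starRingEnd ℂ) y3)*Complex.I^2 + (1/6:ℂ)*x3*((starRingEnd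 ℂ) y2)*Complex.I^2 + (1/6:ℂ)*x3*((starRingEnd ℂ) x3)*Complex.I^2 + (-1/6:ℂ)*x3*((starRingEnd ℂ) x2)*Complex.I^2 + (1/6:ℂ)*x2*((starRingEnd ℂ) y3)*Complex.I^2 + (-1/6:ℂ)*x2*((starRingEnd ℂ) y2)*Complex.I^2 + (-1/6:ℂ)*x2*((starRingEnd ℂ) x3)*Complex.I^2 + (1/6:ℂ)*x2*((starRingEnd ℂ) x2)*Complex.I^2) * hR + ((1/2:ℂ)*y3*((starRingEnd ℂ) y3) + (-1/2:ℂ)*y3*((starRingEnd ℂ) y2) + (-1/2:ℂ)*y2*((starRingEnd ℂ) y3) + (1/2:ℂ)*y2*((starRingEnd ℂ) y2) + (-1/2:ℂ)*((starRingEnd ℂ) x3)*y3 + (1/2:ℂ)*((starRingEnd ℂ) x3)*y2 + (1/2:ℂ)*((starRingEnd ℂ) x2)*y3 + (-1/2:ℂ)*((starRingEnd ℂ) x2)*y2 + (-1/2:ℂ)*x3*((starRingEnd ℂ) y3) + (1/2:ℂ)*x3*((starRingEnd ℂ) y2) + (1/2:ℂ)*x3*((starRingEnd ℂ) x3) + (-1/2:ℂ)*x3*((starRingEnd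 ℂ) x2) + (1/2:ℂ)*x2*((starRingEnd ℂ) y3) + (-1/2:ℂ)*x2*((starRingEnd ℂ) y2) + (-1/2:ℂ)*x2*((starRingEnd ℂ) x3) + (1/2:ℂ)*x2*((starRingEnd ℂ) x2)) * Complex.I_sq
  have hcostR : Complex.normSq (x1 - y1) + Complex.normSq (x2 - y2) + Complex.normSq (x3 - y3)
      = 3 * (Complex.normSq (a - d) + Complex.normSq (b - e) + Complex.normSq (c - f)) := by
    exact_mod_cast hcostC
  have hzcC : ((Complex.normSq (x1 - (a + b)) : ℝ) : ℂ)
      + ((Complex.normSq (x2 - (a + ((-1 + (Real.sqrt 3:ℂ) * Complex.I)/2) * b)) : ℝ) : ℂ)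
      + ((Complex.normSq (x3 - (a + ((-1 - (Real.sqrt 3:ℂ) * Complex.I)/2) * b)) : ℝ) : ℂ)
      = 3 * ((Complex.normSq c : ℝ) : ℂ) := by
    simp only [← Complex.mul_conj]
    rw [ha, hb, hc]
    simp only [map_sub, map_add, map_mul, map_div₀, map_neg, map_one, map_ofNat,
      Complex.conj_I, Complex.conj_ofReal]
    linear_combination ((7/36:ℂ)*x3*((starRingEnd ℂ) x3)*Complex.I^2 + (1/24:ℂ)*x3*((starRingEnd ℂ) x3)*Complex.I^4 + (1/72:ℂ)*x3*((starRingEnd ℂ) x3)*(Real.sqrt 3:ℂ)^2*Complex.I^4 + (-2/9:ℂ)*x3*((starRingEnd ℂ) x2)*Complex.I^2 + (-1/24:ℂ)*x3*((starRingEnd ℂ) x2)*Complex.I^4 + (1/36:ℂ)*x3*((starRingEnd ℂ) x2)*(Real.sqrt 3:ℂ)*Complex.I^3 + (-1/72:ℂ)*x3*((starRingEnd ℂ) x2)*(Real.sqrt 3:ℂ)^2*Complex.I^4 + (1/36:ℂ)*x3*((starRingEnd ℂ) x1)*Complex.I^2 + (-1/36:ℂ)*x3*((starRingEnd ℂ)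 x1)*(Real.sqrt 3:ℂ)*Complex.I^3 + (-2/9:ℂ)*x2*((starRingEnd ℂ) x3)*Complex.I^2 + (-1/24:ℂ)*x2*((starRingEnd ℂ) x3)*Complex.I^4 + (-1/36:ℂ)*x2*((starRingEnd ℂ) x3)*(Real.sqrt 3:ℂ)*Complex.I^3 + (-1/72:ℂ)*x2*((starRingEnd ℂ) x3)*(Real.sqrt 3:ℂ)^2*Complex.I^4 + (7/36:ℂ)*x2*((starRingEnd ℂ) x2)*Complex.I^2 + (1/24:ℂ)*x2*((starRingEnd ℂ) x2)*Complex.I^4 + (1/72:ℂ)*x2*((starRingEnd ℂ) x2)*(Real.sqrt 3:ℂ)^2*Complex.I^4 + (1/36:ℂ)*x2*((starRingEnd ℂ) x1)*Complex.I^2 + (1/36:ℂ)*x2*((starRingEnd ℂ) x1)*(Real.sqrt 3:ℂ)*Complex.I^3 + (1/36:ℂ)*x1*((starRingEnd ℂ) x3)*Complex.I^2 + (1/36:ℂ)*x1*((starRingEnd ℂ) x3)*(Real.sqrt 3:ℂ)*Complex.I^3 + (1/36:ℂ)*x1*((starRingEnd ℂ) x2)*Complex.I^2 + (-1/36:ℂ)*x1*((starRingEnd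 ℂ) x2)*(Real.sqrt 3:ℂ)*Complex.I^3 + (-1/18:ℂ)*x1*((starRingEnd ℂ) x1)*Complex.I^2) * hR + ((11/24:ℂ)*x3*((starRingEnd ℂ) x3) + (1/8:ℂ)*x3*((starRingEnd ℂ) x3)*Complex.I^2 + (-13/24:ℂ)*x3*((starRingEnd ℂ) x2) + (-1/8:ℂ)*x3*((starRingEnd ℂ) x2)*Complex.I^2 + (1/12:ℂ)*x3*((starRingEnd ℂ) x2)*(Real.sqrt 3:ℂ)*Complex.I + (1/12:ℂ)*x3*((starRingEnd ℂ) x1) + (-1/12:ℂ)*x3*((starRingEnd ℂ) x1)*(Real.sqrt 3:ℂ)*Complex.I + (-13/24:ℂ)*x2*((starRingEnd ℂ) x3) + (-1/8:ℂ)*x2*((starRingEnd ℂ) x3)*Complex.I^2 + (-1/12:ℂ)*x2*((starRingEnd ℂ) x3)*(Real.sqrt 3:ℂ)*Complex.I + (11/24:ℂ)*x2*((starRingEnd ℂ) x2) + (1/8:ℂ)*x2*((starRingEnd ℂ) x2)*Complex.I^2 + (1/12:ℂ)*x2*((starRingEnd ℂ) x1) + (1/12:ℂ)*x2*((starRingEnd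 ℂ) x1)*(Real.sqrt 3:ℂ)*Complex.I + (1/12:ℂ)*x1*((starRingEnd ℂ) x3) + (1/12:ℂ)*x1*((starRingEnd ℂ) x3)*(Real.sqrt 3:ℂ)*Complex.I + (1/12:ℂ)*x1*((starRingEnd ℂ) x2) + (-1/12:ℂ)*x1*((starRingEnd ℂ) x2)*(Real.sqrt 3:ℂ)*Complex.I + (-1/6:ℂ)*x1*((starRingEnd ℂ) x1)) * Complex.I_sq
  have hzcR : Complex.normSq (x1 - (a + b)) + Complex.normSq (x2 - (a + ((-1 + (Real.sqrt 3:ℂ) * Complex.I)/2) * b))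
      + Complex.normSq (x3 - (a + ((-1 - (Real.sqrt 3:ℂ) * Complex.I)/2) * b)) = 3 * Complex.normSq c := by
    exact_mod_cast hzcC
  have hequiC : e * (starRingEnd ℂ) f
      = ((1:ℂ)/18 + (Real.sqrt 3:ℂ) * Complex.I / 18) *
          (((Complex.normSq (y1 - y2) : ℝ) : ℂ) - ((Complex.normSq (y1 - y3) : ℝ) : ℂ))
        + ((1:ℂ)/9) *
          (((Complex.normSq (y1 - y3) : ℝ) : ℂ) - ((Complex.normSq (y2 - y3) : ℝ) : ℂ)) := by
    simp only [← Complex.mul_conj]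
    rw [he, hf]
    simp only [map_sub, map_add, map_mul, map_div₀, map_neg, map_one, map_ofNat,
      Complex.conj_I, Complex.conj_ofReal]
    linear_combination ((1/36:ℂ)*y3*((starRingEnd ℂ) y3)*Complex.I^2 + (-1/36:ℂ)*y3*((starRingEnd ℂ) y2)*Complex.I^2 + (-1/36:ℂ)*y2*((starRingEnd ℂ) y3)*Complex.I^2 + (1/36:ℂ)*y2*((starRingEnd ℂ) y2)*Complex.I^2) * hR + ((1/12:ℂ)*y3*((starRingEnd ℂ) y3) + (-1/12:ℂ)*y3*((starRingEnd ℂ) y2) + (-1/12:ℂ)*y2*((starRingEnd ℂ) y3) + (1/12:ℂ)*y2*((starRingEnd ℂ) y2)) * Complex.I_sq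
  have hns1 : Complex.normSq (y1 - y2) = Complex.normSq (y1 - y3) := by
    rw [← Complex.sq_norm, ← Complex.sq_norm, hy1]
  have hns2 : Complex.normSq (y1 - y3) = Complex.normSq (y2 - y3) := by
    rw [← Complex.sq_norm, ← Complex.sq_norm, hy2]
  rw [hns1, hns2] at hequiC
  simp only [sub_self, mul_zero, add_zero, zero_add] at hequiC
  have horC : (starRingEnd ℂ) (x2 - x1) * (x3 - x1) - (x2 - x1) * (starRingEnd ℂ) (x3 - x1)
      = ((3 * Real.sqrt 3 * (Complex.normSq b - Complex.normSq c) : ℝ) : ℂ) * Complex.I := by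
    push_cast
    rw [show ((Complex.normSq b : ℝ) : ℂ) = b * (starRingEnd ℂ) b from (Complex.mul_conj b).symm,
      show ((Complex.normSq c : ℝ) : ℂ) = c * (starRingEnd ℂ) c from (Complex.mul_conj c).symm]
    rw [hb, hc]
    simp only [map_sub, map_add, map_mul, map_div₀, map_neg, map_one, map_ofNat,
      Complex.conj_I, Complex.conj_ofReal]
    linear_combination ((1/3:ℂ)*x3*((starRingEnd ℂ) x2)*Complex.I^2 + (-1/3:ℂ)*x3*((starRingEnd ℂ) x1)*Complex.I^2 + (-1/3:ℂ)*x2*((starRingEnd ℂ) x3)*Complex.I^2 + (1/3:ℂ)*x2*((starRingEnd ℂ) x1)*Complex.I^2 + (1/3:ℂ)*x1*((starRingEnd ℂ) x3)*Complex.I^2 + (-1/3:ℂ)*x1*((starRingEnd ℂ) x2)*Complex.I^2) * hR + ((1:ℂ)*x3*((starRingEnd ℂ) x2) + (-1:ℂ)*x3*((starRingEnd ℂ) x1) + (-1:ℂ)*x2*((starRingEnd ℂ) x3) + (1:ℂ)*x2*((starRingEnd ℂ) x1) + (1:ℂ)*x1*((starRingEnd ℂ) x3) + (-1:ℂ)*x1*((starRingEnd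 ℂ) x2)) * Complex.I_sq
  have him : ((2 * ((starRingEnd ℂ) (x2 - x1) * (x3 - x1)).im : ℝ) : ℂ) * Complex.I
      = ((3 * Real.sqrt 3 * (Complex.normSq b - Complex.normSq c) : ℝ) : ℂ) * Complex.I := by
    rw [← Complex.sub_conj, map_mul, Complex.conj_conj]
    exact horC
  have him2 : 2 * ((starRingEnd ℂ) (x2 - x1) * (x3 - x1)).im
      = 3 * Real.sqrt 3 * (Complex.normSq b - Complex.normSq c) := by
    have := mul_right_cancel₀ Complex.I_ne_zero him
    exact_mod_cast this
  have hs3 : 0 < Real.sqrt 3 := Real.sqrt_pos.mpr (by norm_num)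
  have hbc : Complex.normSq c < Complex.normSq b := by nlinarith [hpos, him2, hs3]
  simp only [Complex.sq_norm] at hopt
  rw [hz] at hopt
  dsimp only at hopt
  have key : Complex.normSq (a - d) + Complex.normSq (b - e) + Complex.normSq (c - f)
      = Complex.normSq c := by linarith [hcostR, hzcR, hopt]
  have hY1 : y1 = d + e + f := by
    rw [hd, he, hf]; linear_combination (0:ℂ) * hR + (0:ℂ) * Complex.I_sq
  have hY2 : y2 = d + ((-1 + (Real.sqrt 3:ℂ) * Complex.I)/2) * e + ((-1 - (Real.sqrt 3:ℂ) * Complex.I)/2) * f := by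
    rw [hd, he, hf]; linear_combination ((-1/6:ℂ)*y3*Complex.I^2 + (1/6:ℂ)*y2*Complex.I^2) * hR + ((-1/2:ℂ)*y3 + (1/2:ℂ)*y2) * Complex.I_sq
  have hY3 : y3 = d + ((-1 - (Real.sqrt 3:ℂ) * Complex.I)/2) * e + ((-1 + (Real.sqrt 3:ℂ) * Complex.I)/2) * f := by
    rw [hd, he, hf]; linear_combination ((1/6:ℂ)*y3*Complex.I^2 + (-1/6:ℂ)*y2*Complex.I^2) * hR + ((1/2:ℂ)*y3 + (-1/2:ℂ)*y2) * Complex.I_sq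
  rcases mul_eq_zero.mp hequiC with he0 | hf0
  · -- e = 0 : contradiction with orientation
    rw [he0, sub_zero] at key
    have hble : Complex.normSq b ≤ Complex.normSq c := by
      have := Complex.normSq_nonneg (a - d)
      have := Complex.normSq_nonneg (c - f)
      linarith
    exact absurd hble (not_le.mpr hbc)
  · -- conj f = 0, so f = 0
    have hf0' : f = 0 := by simpa using hf0
    rw [hf0', sub_zero] at key
    have h1 : Complex.normSq (a - d) = 0 := by
      have := Complex.normSq_nonneg (a - d)
      have := Complex.normSq_nonneg (b - e)
      linarith
    have h2 : Complex.normSq (b - e) = 0 := by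
      have := Complex.normSq_nonneg (a - d)
      have := Complex.normSq_nonneg (b - e)
      linarith
    have had : a - d = 0 := Complex.normSq_eq_zero.mp h1
    have hbe : b - e = 0 := Complex.normSq_eq_zero.mp h2
    rw [hz]
    simp only [Prod.mk.injEq]
    refine ⟨?_, ?_, ?_⟩
    · linear_combination hY1 - had - hbe + hf0'
    · linear_combination hY2 - had - ((-1 + (Real.sqrt 3:ℂ) * Complex.I)/2) * hbe + ((-1 - (Real.sqrt 3:ℂ) * Complex.I)/2) * hf0'
    · linear_combination hY3 - had - ((-1 - (Real.sqrt 3:ℂ) * Complex.I)/2) * hbe + ((-1 + (Real.sqrt 3:ℂ) * Complex.I)/2) * hf0'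
end

section
/- Planarity of optimally aligned equilateral triangles: let d ≥ 2 and let x₁, x₂, x₃ ∈ EuclideanSpace ℝ d be affinely independent points. Suppose (y₁, y₂, y₃) is a global minimizer of the sum of squared distances to x subject to the equilateral constraint; that is, ‖y₁ − y₂‖ = ‖y₁ − y₃‖ = ‖y₂ − y₃‖ and for every triple (z₁, z₂, z₃) with ‖z₁ − z₂‖ = ‖z₁ − z₃‖ = ‖z₂ − z₃‖ one has Σᵢ ‖xᵢ − yᵢ‖² ≤ Σᵢ ‖xᵢ − zᵢ‖². Then each yᵢ lies in the affine span of {x₁, x₂, x₃}. -/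
local notation "⟪" x ", " y "⟫" => @inner ℝ _ _ x y

lemma norm_decomp {d : ℕ} (r e f : EuclideanSpace ℝ (Fin d)) (a b : ℝ)
    (he : ‖e‖ = 1) (hf : ‖f‖ = 1) (hef : ⟪e, f⟫ = 0)
    (her : ⟪e, r⟫ = 0) (hfr : ⟪f, r⟫ = 0) :
    ‖r + a • e + b • f‖ ^ 2 = ‖r‖ ^ 2 + a ^ 2 + b ^ 2 := by
  have h1 : ⟪e, e⟫ = 1 := by rw [real_inner_self_eq_norm_sq, he]; norm_num
  have h2 : ⟪f, f⟫ = 1 := by rw [real_inner_self_eq_norm_sq, hf]; norm_num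
  have hre : ⟪r, e⟫ = 0 := by rw [real_inner_comm]; exact her
  have hrf : ⟪r, f⟫ = 0 := by rw [real_inner_comm]; exact hfr
  have hfe : ⟪f, e⟫ = 0 := by rw [real_inner_comm]; exact hef
  rw [← real_inner_self_eq_norm_sq, ← real_inner_self_eq_norm_sq]
  simp only [inner_add_add_self, inner_add_left, inner_add_right, real_inner_smul_left,
    real_inner_smul_right, h1, h2, hef, hfe, her, hfr, hre, hrf]
  ring

lemma exp_cost {d : ℕ} (x c r e f : EuclideanSpace ℝ (Fin d)) (u v : ℝ)
    (he : ‖e‖ = 1) (hf : ‖f‖ = 1) (hef : ⟪e, f⟫ = 0)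
    (her : ⟪e, r⟫ = 0) (hfr : ⟪f, r⟫ = 0) (hex : ⟪e, x - c⟫ = 0) :
    ‖x - (c + r + u • e + v • f)‖ ^ 2 =
      ‖x - c‖ ^ 2 - 2 * ⟪x - c, r⟫ - 2 * v * ⟪f, x - c⟫ + ‖r‖ ^ 2 + u ^ 2 + v ^ 2 := by
  have key : x - (c + r + u • e + v • f) = (x - c) - (r + u • e + v • f) := by abel
  rw [key, norm_sub_sq_real, norm_decomp r e f u v he hf hef her hfr]
  have h1 : ⟪x - c, r + u • e + v • f⟫ = ⟪x - c, r⟫ + v * ⟪f, x - c⟫ := by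
    have hxe : ⟪x - c, e⟫ = 0 := by rw [real_inner_comm]; exact hex
    rw [inner_add_right, inner_add_right, inner_smul_right, inner_smul_right, hxe,
      real_inner_comm (x - c) f]
    ring
  rw [h1]; ring

lemma exp_dist {d : ℕ} (c r r' e f : EuclideanSpace ℝ (Fin d)) (u v u' v' : ℝ)
    (he : ‖e‖ = 1) (hf : ‖f‖ = 1) (hef : ⟪e, f⟫ = 0)
    (her : ⟪e, r⟫ = 0) (hfr : ⟪f, r⟫ = 0) (her' : ⟪e, r'⟫ = 0) (hfr' : ⟪f, r'⟫ = 0) :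
    ‖(c + r + u • e + v • f) - (c + r' + u' • e + v' • f)‖ ^ 2 =
      ‖r - r'‖ ^ 2 + (u - u') ^ 2 + (v - v') ^ 2 := by
  have key : (c + r + u • e + v • f) - (c + r' + u' • e + v' • f)
      = (r - r') + (u - u') • e + (v - v') • f := by
    rw [sub_smul, sub_smul]; abel
  rw [key, norm_decomp]
  · exact he
  · exact hf
  · exact hef
  · rw [inner_sub_right, her, her']; ring
  · rw [inner_sub_right, hfr, hfr']; ring

set_option maxHeartbeats 1000000 in
lemma key_foc {d : ℕ} (x₁ x₂ x₃ y₁ y₂ y₃ c e f : EuclideanSpace ℝ (Fin d))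
    (he : ‖e‖ = 1) (hf : ‖f‖ = 1) (hef : ⟪e, f⟫ = 0)
    (hex1 : ⟪e, x₁ - c⟫ = 0) (hex2 : ⟪e, x₂ - c⟫ = 0) (hex3 : ⟪e, x₃ - c⟫ = 0)
    (hy1 : ‖y₁ - y₂‖ = ‖y₁ - y₃‖) (hy2 : ‖y₁ - y₃‖ = ‖y₂ - y₃‖)
    (hopt : ∀ z₁ z₂ z₃ : EuclideanSpace ℝ (Fin d),
      ‖z₁ - z₂‖ = ‖z₁ - z₃‖ → ‖z₁ - z₃‖ = ‖z₂ - z₃‖ →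
      ‖x₁ - y₁‖ ^ 2 + ‖x₂ - y₂‖ ^ 2 + ‖x₃ - y₃‖ ^ 2 ≤
        ‖x₁ - z₁‖ ^ 2 + ‖x₂ - z₂‖ ^ 2 + ‖x₃ - z₃‖ ^ 2) :
    ⟪e, y₁ - c⟫ * ⟪f, x₁ - c⟫ + ⟪e, y₂ - c⟫ * ⟪f, x₂ - c⟫ + ⟪e, y₃ - c⟫ * ⟪f, x₃ - c⟫ = 0 := by
  have h1 : ⟪e, e⟫ = 1 := by rw [real_inner_self_eq_norm_sq, he]; norm_num
  have h2 : ⟪f, f⟫ = 1 := by rw [real_inner_self_eq_norm_sq, hf]; norm_num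
  have hfe : ⟪f, e⟫ = 0 := by rw [real_inner_comm]; exact hef
  have hre : ∀ (y : EuclideanSpace ℝ (Fin d)),
      ⟪e, (y - c) - ⟪e, y - c⟫ • e - ⟪f, y - c⟫ • f⟫ = 0 := by
    intro y
    rw [inner_sub_right, inner_sub_right, inner_smul_right, inner_smul_right, h1, hef]; ring
  have hrf : ∀ (y : EuclideanSpace ℝ (Fin d)),
      ⟪f, (y - c) - ⟪e, y - c⟫ • e - ⟪f, y - c⟫ • f⟫ = 0 := by
    intro y
    rw [inner_sub_right, inner_sub_right, inner_smul_right, inner_smul_right, h2, hfe]; ring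
  set α₁ := ⟪e, y₁ - c⟫ with hα₁
  set α₂ := ⟪e, y₂ - c⟫ with hα₂
  set α₃ := ⟪e, y₃ - c⟫ with hα₃
  set β₁ := ⟪f, y₁ - c⟫ with hβ₁
  set β₂ := ⟪f, y₂ - c⟫ with hβ₂
  set β₃ := ⟪f, y₃ - c⟫ with hβ₃
  set r₁ := (y₁ - c) - α₁ • e - β₁ • f with hr₁
  set r₂ := (y₂ - c) - α₂ • e - β₂ • f with hr₂
  set r₃ := (y₃ - c) - α₃ • e - β₃ • f with hr₃
  have her1 : ⟪e, r₁⟫ = 0 := hre y₁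
  have her2 : ⟪e, r₂⟫ = 0 := hre y₂
  have her3 : ⟪e, r₃⟫ = 0 := hre y₃
  have hfr1 : ⟪f, r₁⟫ = 0 := hrf y₁
  have hfr2 : ⟪f, r₂⟫ = 0 := hrf y₂
  have hfr3 : ⟪f, r₃⟫ = 0 := hrf y₃
  have hy₁ : y₁ = c + r₁ + α₁ • e + β₁ • f := by rw [hr₁]; abel
  have hy₂ : y₂ = c + r₂ + α₂ • e + β₂ • f := by rw [hr₂]; abel
  have hy₃ : y₃ = c + r₃ + α₃ • e + β₃ • f := by rw [hr₃]; abel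
  clear_value r₁ r₂ r₃
  clear hr₁ hr₂ hr₃
  clear_value α₁ α₂ α₃ β₁ β₂ β₃
  clear hα₁ hα₂ hα₃ hβ₁ hβ₂ hβ₃ hre hrf
  set F₁ := ⟪f, x₁ - c⟫ with hF₁
  set F₂ := ⟪f, x₂ - c⟫ with hF₂
  set F₃ := ⟪f, x₃ - c⟫ with hF₃
  set A := α₁ * F₁ + α₂ * F₂ + α₃ * F₃ with hA
  set B := β₁ * F₁ + β₂ * F₂ + β₃ * F₃ with hB
  clear_value A B
  show A = 0
  by_contra hA0
  have hρ : 0 < Real.sqrt (A ^ 2 + B ^ 2) := Real.sqrt_pos.2 (by positivity)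
  have hρ2 : Real.sqrt (A ^ 2 + B ^ 2) ^ 2 = A ^ 2 + B ^ 2 := Real.sq_sqrt (by positivity)
  set ρ := Real.sqrt (A ^ 2 + B ^ 2) with hρdef
  have hsρ : (A / ρ) * ρ = A := by field_simp
  have hcoρ : (B / ρ) * ρ = B := by field_simp
  set s := A / ρ with hs
  set co := B / ρ with hco
  have hsc : co ^ 2 + s ^ 2 = 1 := by
    rw [hs, hco]
    field_simp
    rw [add_comm (B ^ 2)]
    exact hρ2.symm
  clear_value ρ
  clear_value s co
  clear hs hco hρdef
  -- rotated points preserve pairwise distances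
  have hdist : ∀ (r r' : EuclideanSpace ℝ (Fin d)) (a b a' b' : ℝ),
      ⟪e, r⟫ = 0 → ⟪f, r⟫ = 0 → ⟪e, r'⟫ = 0 → ⟪f, r'⟫ = 0 →
      ‖(c + r + (a * co - b * s) • e + (a * s + b * co) • f) -
        (c + r' + (a' * co - b' * s) • e + (a' * s + b' * co) • f)‖ =
      ‖(c + r + a • e + b • f) - (c + r' + a' • e + b' • f)‖ := by
    intro r r' a b a' b' h1' h2' h3' h4'
    have e1 := exp_dist c r r' e f (a * co - b * s) (a * s + b * co) (a' * co - b' * s)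
      (a' * s + b' * co) he hf hef h1' h2' h3' h4'
    have e2 := exp_dist c r r' e f a b a' b' he hf hef h1' h2' h3' h4'
    have hsq : ‖(c + r + (a * co - b * s) • e + (a * s + b * co) • f) -
        (c + r' + (a' * co - b' * s) • e + (a' * s + b' * co) • f)‖ ^ 2 =
        ‖(c + r + a • e + b • f) - (c + r' + a' • e + b' • f)‖ ^ 2 := by
      rw [e1, e2]
      linear_combination ((a - a') ^ 2 + (b - b') ^ 2) * hsc
    have := congrArg Real.sqrt hsq
    rwa [Real.sqrt_sq (norm_nonneg _), Real.sqrt_sq (norm_nonneg _)] at this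
  have hz12 : ‖(c + r₁ + (α₁ * co - β₁ * s) • e + (α₁ * s + β₁ * co) • f) -
      (c + r₂ + (α₂ * co - β₂ * s) • e + (α₂ * s + β₂ * co) • f)‖ = ‖y₁ - y₂‖ := by
    rw [hy₁, hy₂]; exact hdist r₁ r₂ α₁ β₁ α₂ β₂ her1 hfr1 her2 hfr2
  have hz13 : ‖(c + r₁ + (α₁ * co - β₁ * s) • e + (α₁ * s + β₁ * co) • f) -
      (c + r₃ + (α₃ * co - β₃ * s) • e + (α₃ * s + β₃ * co) • f)‖ = ‖y₁ - y₃‖ := by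
    rw [hy₁, hy₃]; exact hdist r₁ r₃ α₁ β₁ α₃ β₃ her1 hfr1 her3 hfr3
  have hz23 : ‖(c + r₂ + (α₂ * co - β₂ * s) • e + (α₂ * s + β₂ * co) • f) -
      (c + r₃ + (α₃ * co - β₃ * s) • e + (α₃ * s + β₃ * co) • f)‖ = ‖y₂ - y₃‖ := by
    rw [hy₂, hy₃]; exact hdist r₂ r₃ α₂ β₂ α₃ β₃ her2 hfr2 her3 hfr3
  have hole := hopt (c + r₁ + (α₁ * co - β₁ * s) • e + (α₁ * s + β₁ * co) • f)
    (c + r₂ + (α₂ * co - β₂ * s) • e + (α₂ * s + β₂ * co) • f)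
    (c + r₃ + (α₃ * co - β₃ * s) • e + (α₃ * s + β₃ * co) • f)
    (by rw [hz12, hz13]; exact hy1) (by rw [hz13, hz23]; exact hy2)
  have c1y : ‖x₁ - y₁‖ ^ 2 = ‖x₁ - c‖ ^ 2 - 2 * ⟪x₁ - c, r₁⟫ - 2 * β₁ * F₁
      + ‖r₁‖ ^ 2 + α₁ ^ 2 + β₁ ^ 2 := by
    rw [hy₁]; exact exp_cost x₁ c r₁ e f α₁ β₁ he hf hef her1 hfr1 hex1
  have c2y : ‖x₂ - y₂‖ ^ 2 = ‖x₂ - c‖ ^ 2 - 2 * ⟪x₂ - c, r₂⟫ - 2 * β₂ * F₂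
      + ‖r₂‖ ^ 2 + α₂ ^ 2 + β₂ ^ 2 := by
    rw [hy₂]; exact exp_cost x₂ c r₂ e f α₂ β₂ he hf hef her2 hfr2 hex2
  have c3y : ‖x₃ - y₃‖ ^ 2 = ‖x₃ - c‖ ^ 2 - 2 * ⟪x₃ - c, r₃⟫ - 2 * β₃ * F₃
      + ‖r₃‖ ^ 2 + α₃ ^ 2 + β₃ ^ 2 := by
    rw [hy₃]; exact exp_cost x₃ c r₃ e f α₃ β₃ he hf hef her3 hfr3 hex3
  have c1z : ‖x₁ - (c + r₁ + (α₁ * co - β₁ * s) • e + (α₁ * s + β₁ * co) • f)‖ ^ 2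
      = ‖x₁ - c‖ ^ 2 - 2 * ⟪x₁ - c, r₁⟫ - 2 * (α₁ * s + β₁ * co) * F₁
      + ‖r₁‖ ^ 2 + α₁ ^ 2 + β₁ ^ 2 := by
    rw [exp_cost x₁ c r₁ e f _ _ he hf hef her1 hfr1 hex1]
    linear_combination (α₁ ^ 2 + β₁ ^ 2) * hsc
  have c2z : ‖x₂ - (c + r₂ + (α₂ * co - β₂ * s) • e + (α₂ * s + β₂ * co) • f)‖ ^ 2
      = ‖x₂ - c‖ ^ 2 - 2 * ⟪x₂ - c, r₂⟫ - 2 * (α₂ * s + β₂ * co) * F₂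
      + ‖r₂‖ ^ 2 + α₂ ^ 2 + β₂ ^ 2 := by
    rw [exp_cost x₂ c r₂ e f _ _ he hf hef her2 hfr2 hex2]
    linear_combination (α₂ ^ 2 + β₂ ^ 2) * hsc
  have c3z : ‖x₃ - (c + r₃ + (α₃ * co - β₃ * s) • e + (α₃ * s + β₃ * co) • f)‖ ^ 2
      = ‖x₃ - c‖ ^ 2 - 2 * ⟪x₃ - c, r₃⟫ - 2 * (α₃ * s + β₃ * co) * F₃
      + ‖r₃‖ ^ 2 + α₃ ^ 2 + β₃ ^ 2 := by
    rw [exp_cost x₃ c r₃ e f _ _ he hf hef her3 hfr3 hex3]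
    linear_combination (α₃ ^ 2 + β₃ ^ 2) * hsc
  rw [c1y, c2y, c3y, c1z, c2z, c3z] at hole
  have h0 := sub_nonneg.mpr hole
  have hid : (‖x₁ - c‖ ^ 2 - 2 * ⟪x₁ - c, r₁⟫ - 2 * (α₁ * s + β₁ * co) * F₁
        + ‖r₁‖ ^ 2 + α₁ ^ 2 + β₁ ^ 2
      + (‖x₂ - c‖ ^ 2 - 2 * ⟪x₂ - c, r₂⟫ - 2 * (α₂ * s + β₂ * co) * F₂
        + ‖r₂‖ ^ 2 + α₂ ^ 2 + β₂ ^ 2)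
      + (‖x₃ - c‖ ^ 2 - 2 * ⟪x₃ - c, r₃⟫ - 2 * (α₃ * s + β₃ * co) * F₃
        + ‖r₃‖ ^ 2 + α₃ ^ 2 + β₃ ^ 2))
      - (‖x₁ - c‖ ^ 2 - 2 * ⟪x₁ - c, r₁⟫ - 2 * β₁ * F₁ + ‖r₁‖ ^ 2 + α₁ ^ 2 + β₁ ^ 2
      + (‖x₂ - c‖ ^ 2 - 2 * ⟪x₂ - c, r₂⟫ - 2 * β₂ * F₂ + ‖r₂‖ ^ 2 + α₂ ^ 2 + β₂ ^ 2)
      + (‖x₃ - c‖ ^ 2 - 2 * ⟪x₃ - c, r₃⟫ - 2 * β₃ * F₃ + ‖r₃‖ ^ 2 + α₃ ^ 2 + β₃ ^ 2))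
      = -2 * (s * A + (co - 1) * B) := by
    rw [hA, hB]; ring
  rw [hid] at h0
  have hKey : s * A + (co - 1) * B ≤ 0 := by linarith only [h0]
  have hmul : (s * A + (co - 1) * B) * ρ ≤ 0 :=
    mul_nonpos_of_nonpos_of_nonneg hKey hρ.le
  have hexp : (s * A + (co - 1) * B) * ρ = A ^ 2 + B ^ 2 - B * ρ := by
    linear_combination A * hsρ + B * hcoρ
  rw [hexp] at hmul
  have h5 : ρ ≤ B := by
    by_contra hc
    push_neg at hc
    have h8 := mul_lt_mul_of_pos_right hc hρ
    have h9 : ρ ^ 2 = ρ * ρ := sq ρ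
    linarith only [hmul, h8, h9, hρ2]
  have h7 : ρ * ρ ≤ B * B := mul_le_mul h5 h5 hρ.le (hρ.le.trans h5)
  have h6 : A ^ 2 ≤ 0 := by
    have h9 : ρ ^ 2 = ρ * ρ := sq ρ
    have h10 : B ^ 2 = B * B := sq B
    linarith only [hρ2, h7, h9, h10]
  exact hA0 (pow_eq_zero_iff two_ne_zero |>.mp (le_antisymm h6 (sq_nonneg A)))

lemma coef_zero {d : ℕ} (e u w p q : EuclideanSpace ℝ (Fin d))
    (hep : ⟪e, p⟫ = 0) (heq : ⟪e, q⟫ = 0)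
    (hkey : ∀ f, ‖f‖ = 1 → ⟪e, f⟫ = 0 → ⟪e, u⟫ * ⟪f, p⟫ + ⟪e, w⟫ * ⟪f, q⟫ = 0) :
    ⟪e, u⟫ • p + ⟪e, w⟫ • q = 0 := by
  set v := ⟪e, u⟫ • p + ⟪e, w⟫ • q with hv
  by_contra hv0
  have hnv : ‖v‖ ≠ 0 := norm_ne_zero_iff.2 hv0
  set f := ‖v‖⁻¹ • v with hf
  have hf1 : ‖f‖ = 1 := norm_smul_inv_norm hv0
  have hef : ⟪e, f⟫ = 0 := by
    rw [hf, real_inner_smul_right, hv, inner_add_right, inner_smul_right, inner_smul_right,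
      hep, heq]
    ring
  have h := hkey f hf1 hef
  have hfp : ⟪f, p⟫ = ‖v‖⁻¹ * ⟪v, p⟫ := by rw [hf, real_inner_smul_left]
  have hfq : ⟪f, q⟫ = ‖v‖⁻¹ * ⟪v, q⟫ := by rw [hf, real_inner_smul_left]
  have hvv : ⟪v, v⟫ = ⟪e, u⟫ * ⟪v, p⟫ + ⟪e, w⟫ * ⟪v, q⟫ := by
    conv_lhs => rw [hv]
    rw [inner_add_right, inner_smul_right, inner_smul_right]
  have hzero : ‖v‖⁻¹ * ⟪v, v⟫ = 0 := by
    rw [hvv]; rw [hfp, hfq] at h; linarith [h]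
  have : ⟪v, v⟫ = 0 := by
    rcases mul_eq_zero.1 hzero with h' | h'
    · exact absurd h' (inv_ne_zero hnv)
    · exact h'
  exact hv0 (inner_self_eq_zero.1 this)

theorem optimal_equilateral_in_affine_span (d : ℕ) (hd : 2 ≤ d)
    (x₁ x₂ x₃ : EuclideanSpace ℝ (Fin d)) (hx : AffineIndependent ℝ ![x₁, x₂, x₃])
    (y₁ y₂ y₃ : EuclideanSpace ℝ (Fin d))
    (hy1 : ‖y₁ - y₂‖ = ‖y₁ - y₃‖) (hy2 : ‖y₁ - y₃‖ = ‖y₂ - y₃‖)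
    (hopt : ∀ z₁ z₂ z₃ : EuclideanSpace ℝ (Fin d),
      ‖z₁ - z₂‖ = ‖z₁ - z₃‖ → ‖z₁ - z₃‖ = ‖z₂ - z₃‖ →
      ‖x₁ - y₁‖ ^ 2 + ‖x₂ - y₂‖ ^ 2 + ‖x₃ - y₃‖ ^ 2 ≤
        ‖x₁ - z₁‖ ^ 2 + ‖x₂ - z₂‖ ^ 2 + ‖x₃ - z₃‖ ^ 2) :
    y₁ ∈ affineSpan ℝ {x₁, x₂, x₃} ∧ y₂ ∈ affineSpan ℝ {x₁, x₂, x₃} ∧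
      y₃ ∈ affineSpan ℝ {x₁, x₂, x₃} := by
  classical
  -- linear independence consequences of affine independence
  have hind1 : ∀ a b : ℝ, a • (x₂ - x₁) + b • (x₃ - x₁) = 0 → a = 0 ∧ b = 0 := by
    intro a b hab
    have hsum : Finset.univ.sum ![-(a + b), a, b] = 0 := by
      simp [Fin.sum_univ_three]
    have hcomb : ∑ i, (![-(a + b), a, b]) i • (![x₁, x₂, x₃]) i = 0 := by
      rw [Fin.sum_univ_three]
      simp only [Matrix.cons_val_zero, Matrix.cons_val_one, Matrix.head_cons,
        Matrix.cons_val_two, Matrix.tail_cons]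
      linear_combination (norm := module) hab
    have h := affineIndependent_iff.mp hx Finset.univ ![-(a + b), a, b] hsum hcomb
    exact ⟨by simpa using h 1 (Finset.mem_univ _), by simpa using h 2 (Finset.mem_univ _)⟩
  have hind2 : ∀ a b : ℝ, a • (x₁ - x₂) + b • (x₃ - x₂) = 0 → a = 0 ∧ b = 0 := by
    intro a b hab
    have hsum : Finset.univ.sum ![a, -(a + b), b] = 0 := by
      simp [Fin.sum_univ_three]
    have hcomb : ∑ i, (![a, -(a + b), b]) i • (![x₁, x₂, x₃]) i = 0 := by
      rw [Fin.sum_univ_three]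
      simp only [Matrix.cons_val_zero, Matrix.cons_val_one, Matrix.head_cons,
        Matrix.cons_val_two, Matrix.tail_cons]
      linear_combination (norm := module) hab
    have h := affineIndependent_iff.mp hx Finset.univ ![a, -(a + b), b] hsum hcomb
    exact ⟨by simpa using h 0 (Finset.mem_univ _), by simpa using h 2 (Finset.mem_univ _)⟩
  -- the key orthogonality claims
  have claim1 : ∀ e : EuclideanSpace ℝ (Fin d), ⟪e, x₂ - x₁⟫ = 0 → ⟪e, x₃ - x₁⟫ = 0 →
      ⟪e, y₂ - x₁⟫ = 0 ∧ ⟪e, y₃ - x₁⟫ = 0 := by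
    intro e he2 he3
    by_cases he0 : e = 0
    · simp [he0]
    have hne : (‖e‖ : ℝ) ≠ 0 := norm_ne_zero_iff.2 he0
    set ee := ‖e‖⁻¹ • e with hee
    have hee1 : ‖ee‖ = 1 := norm_smul_inv_norm he0
    have hee2 : ⟪ee, x₂ - x₁⟫ = 0 := by rw [hee, real_inner_smul_left, he2]; ring
    have hee3 : ⟪ee, x₃ - x₁⟫ = 0 := by rw [hee, real_inner_smul_left, he3]; ring
    have hex1 : ⟪ee, x₁ - x₁⟫ = 0 := by simp
    have hkey : ∀ f, ‖f‖ = 1 → ⟪ee, f⟫ = 0 →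
        ⟪ee, y₂ - x₁⟫ * ⟪f, x₂ - x₁⟫ + ⟪ee, y₃ - x₁⟫ * ⟪f, x₃ - x₁⟫ = 0 := by
      intro f hf hef
      have h := key_foc x₁ x₂ x₃ y₁ y₂ y₃ x₁ ee f hee1 hf hef hex1 hee2 hee3 hy1 hy2 hopt
      simpa using h
    have hv := coef_zero ee (y₂ - x₁) (y₃ - x₁) (x₂ - x₁) (x₃ - x₁) hee2 hee3 hkey
    obtain ⟨h2, h3⟩ := hind1 _ _ hv
    have e2 : ⟪e, y₂ - x₁⟫ = ‖e‖ * ⟪ee, y₂ - x₁⟫ := by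
      rw [hee, real_inner_smul_left]; field_simp
    have e3 : ⟪e, y₃ - x₁⟫ = ‖e‖ * ⟪ee, y₃ - x₁⟫ := by
      rw [hee, real_inner_smul_left]; field_simp
    rw [e2, e3, h2, h3]
    simp
  have claim2 : ∀ e : EuclideanSpace ℝ (Fin d), ⟪e, x₂ - x₁⟫ = 0 → ⟪e, x₃ - x₁⟫ = 0 →
      ⟪e, y₁ - x₂⟫ = 0 := by
    intro e he2 he3
    have he2' : ⟪e, x₁ - x₂⟫ = 0 := by
      have : x₁ - x₂ = -(x₂ - x₁) := by abel
      rw [this, inner_neg_right, he2, neg_zero]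
    have he3' : ⟪e, x₃ - x₂⟫ = 0 := by
      have : x₃ - x₂ = (x₃ - x₁) - (x₂ - x₁) := by abel
      rw [this, inner_sub_right, he2, he3, sub_zero]
    by_cases he0 : e = 0
    · simp [he0]
    have hne : (‖e‖ : ℝ) ≠ 0 := norm_ne_zero_iff.2 he0
    set ee := ‖e‖⁻¹ • e with hee
    have hee1 : ‖ee‖ = 1 := norm_smul_inv_norm he0
    have hee1' : ⟪ee, x₁ - x₂⟫ = 0 := by rw [hee, real_inner_smul_left, he2']; ring
    have hee3' : ⟪ee, x₃ - x₂⟫ = 0 := by rw [hee, real_inner_smul_left, he3']; ring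
    have hex2 : ⟪ee, x₂ - x₂⟫ = 0 := by simp
    have hkey : ∀ f, ‖f‖ = 1 → ⟪ee, f⟫ = 0 →
        ⟪ee, y₁ - x₂⟫ * ⟪f, x₁ - x₂⟫ + ⟪ee, y₃ - x₂⟫ * ⟪f, x₃ - x₂⟫ = 0 := by
      intro f hf hef
      have h := key_foc x₁ x₂ x₃ y₁ y₂ y₃ x₂ ee f hee1 hf hef hee1' hex2 hee3' hy1 hy2 hopt
      simpa using h
    have hv := coef_zero ee (y₁ - x₂) (y₃ - x₂) (x₁ - x₂) (x₃ - x₂) hee1' hee3' hkey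
    obtain ⟨h1, _⟩ := hind2 _ _ hv
    have e1 : ⟪e, y₁ - x₂⟫ = ‖e‖ * ⟪ee, y₁ - x₂⟫ := by
      rw [hee, real_inner_smul_left]; field_simp
    rw [e1, h1, mul_zero]
  -- from orthogonality to span membership
  set K : Submodule ℝ (EuclideanSpace ℝ (Fin d)) :=
    Submodule.span ℝ {x₂ - x₁, x₃ - x₁} with hK
  have hmemK : ∀ w : EuclideanSpace ℝ (Fin d),
      (∀ e : EuclideanSpace ℝ (Fin d), ⟪e, x₂ - x₁⟫ = 0 → ⟪e, x₃ - x₁⟫ = 0 → ⟪e, w⟫ = 0) →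
      w ∈ K := by
    intro w hw
    rw [hK, ← Submodule.orthogonal_orthogonal (Submodule.span ℝ {x₂ - x₁, x₃ - x₁})]
    rw [Submodule.mem_orthogonal]
    intro u hu
    refine hw u ?_ ?_
    · exact Submodule.inner_left_of_mem_orthogonal (Submodule.subset_span (by simp)) hu
    · exact Submodule.inner_left_of_mem_orthogonal (Submodule.subset_span (by simp)) hu
  have hKle : K ≤ vectorSpan ℝ ({x₁, x₂, x₃} : Set (EuclideanSpace ℝ (Fin d))) := by
    rw [hK, Submodule.span_le]
    rintro v (rfl | rfl)
    · exact vsub_mem_vectorSpan ℝ (by simp) (by simp)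
    · exact vsub_mem_vectorSpan ℝ (by simp) (by simp)
  have final : ∀ y : EuclideanSpace ℝ (Fin d), ∀ p : EuclideanSpace ℝ (Fin d),
      p ∈ ({x₁, x₂, x₃} : Set (EuclideanSpace ℝ (Fin d))) →
      y - p ∈ K → y ∈ affineSpan ℝ {x₁, x₂, x₃} := by
    intro y p hp hy
    have h1 : y - p ∈ (affineSpan ℝ ({x₁, x₂, x₃} :
        Set (EuclideanSpace ℝ (Fin d)))).direction := by
      rw [direction_affineSpan]; exact hKle hy
    have h2 := AffineSubspace.vadd_mem_of_mem_direction h1 (subset_affineSpan ℝ _ hp)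
    simpa [vadd_eq_add, sub_add_cancel] using h2
  refine ⟨?_, ?_, ?_⟩
  · refine final y₁ x₂ (by simp) (hmemK _ ?_)
    intro e he2 he3
    exact claim2 e he2 he3
  · refine final y₂ x₁ (by simp) (hmemK _ ?_)
    intro e he2 he3
    exact (claim1 e he2 he3).1
  · refine final y₃ x₁ (by simp) (hmemK _ ?_)
    intro e he2 he3
    exact (claim1 e he2 he3).2
end
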